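/- arXiv:2209.01341 — 3 statements merged into one kernel-verified Lean document; each statement's English description precedes it below -/
import Mathlib

section
/- Let p : ∏_{i=1}^d [n_i] → ℝ and let a rooted tree on {1,…,d} be given, with a bond dimension r_w ≥ 1 assigned to each non-root node w (associated with the edge (w,P(w))) and r_{r₀} = 1 for the root. If for every non-root node w the unfolding matrix p(x_{L(w)∪{w}}; x_{R(w)}) has rank at most r_w, then there exists a family of TTNS cores {G_k}_{k=1}^d with these bond dimensions whose TTNS contraction equals p. -/
open scoped Classical

noncomputable section

/-- A rooted tree on the vertex set `Fin d`: a root and a parent map fixing the root,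
such that every vertex reaches the root under iteration of the parent map. -/
structure ParentTree (d : ℕ) where
  root : Fin d
  parent : Fin d → Fin d
  parent_root : parent root = root
  reaches_root : ∀ v : Fin d, ∃ m : ℕ, parent^[m] v = root

namespace ParentTree

variable {d : ℕ}

/-- The children of a node `k`. -/
def children (T : ParentTree d) (k : Fin d) : Set (Fin d) :=
  {w | w ≠ T.root ∧ w ≠ k ∧ T.parent w = k}

/-- The descendants of a node `w` (the "left" set `L(w)`). -/
def desc (T : ParentTree d) (w : Fin d) : Set (Fin d) :=
  {v | v ≠ w ∧ ∃ m : ℕ, 1 ≤ m ∧ T.parent^[m] v = w}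

end ParentTree

/-- The unfolding matrix `p(x_S; x_{Sᶜ})` of a `d`-dimensional tensor `p`. -/
def unfoldMatrix {d : ℕ} {n : Fin d → ℕ} (p : (∀ i, Fin (n i)) → ℝ)
    (S : Set (Fin d)) :
    Matrix ((i : S) → Fin (n i.1)) ((j : (Sᶜ : Set (Fin d))) → Fin (n j.1)) ℝ :=
  Matrix.of fun xS xSc =>
    p fun i => if h : i ∈ S then xS ⟨i, h⟩ else xSc ⟨i, h⟩

/-- The TTNS contraction of a family of cores `G k (β, x_k, α_k)`, where `β` is the
joint index over the children bonds of `k` and `α_k` is the bond of `k` itself. -/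
def ttnsContract {d : ℕ} (T : ParentTree d) (n r : Fin d → ℕ)
    (G : ∀ k : Fin d, ((w : T.children k) → Fin (r w.1)) → Fin (n k) → Fin (r k) → ℝ) :
    (∀ i, Fin (n i)) → ℝ :=
  fun x => ∑ α : (k : Fin d) → Fin (r k), ∏ k : Fin d, G k (fun w => α w.1) (x k) (α k)

namespace TTNSAux

open ParentTree Function

variable {d : ℕ} (T : ParentTree d)

/-- depth of a vertex: distance to the root. -/
def depth (v : Fin d) : ℕ := Nat.find (T.reaches_root v)

variable {T}

lemma depth_spec (v : Fin d) : T.parent^[depth T v] v = T.root :=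
  Nat.find_spec (T.reaches_root v)

lemma depth_le {v : Fin d} {m : ℕ} (h : T.parent^[m] v = T.root) : depth T v ≤ m :=
  Nat.find_le h

lemma iterate_parent_root (m : ℕ) : T.parent^[m] T.root = T.root := by
  induction m with
  | zero => rfl
  | succ m ih => rw [Function.iterate_succ_apply', ih, T.parent_root]

lemma depth_root : depth T T.root = 0 :=
  Nat.le_zero.mp (depth_le (by rfl))

lemma depth_eq_zero_iff {v : Fin d} : depth T v = 0 ↔ v = T.root := by
  constructor
  · intro h
    have := depth_spec (T := T) v
    rwa [h] at this
  · rintro rfl; exact depth_root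

lemma eq_root_of_periodic {v : Fin d} {c : ℕ} (hc : 1 ≤ c)
    (h : T.parent^[c] v = v) : v = T.root := by
  have hiter : ∀ t : ℕ, T.parent^[t * c] v = v := by
    intro t
    induction t with
    | zero => simp
    | succ t ih => rw [Nat.succ_mul, Function.iterate_add_apply, h, ih]
  have hm : depth T v ≤ (depth T v) * c := Nat.le_mul_of_pos_right _ hc
  have : T.parent^[depth T v * c] v = v := hiter _
  have h2 : T.parent^[depth T v * c] v = T.root := by
    have : depth T v * c = (depth T v * c - depth T v) + depth T v := by omega
    rw [this, Function.iterate_add_apply, depth_spec, iterate_parent_root]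
  rw [← hiter (depth T v), h2]

lemma eq_root_of_parent_eq {v : Fin d} (h : T.parent v = v) : v = T.root :=
  eq_root_of_periodic le_rfl h

lemma depth_parent {v : Fin d} (hv : v ≠ T.root) :
    depth T v = depth T (T.parent v) + 1 := by
  have h1 : 1 ≤ depth T v := by
    rcases Nat.eq_zero_or_pos (depth T v) with h | h
    · exact absurd (depth_eq_zero_iff.mp h) hv
    · exact h
  have hup : T.parent^[depth T v - 1] (T.parent v) = T.root := by
    rw [← Function.iterate_succ_apply]
    have h2 : depth T v - 1 + 1 = depth T v := by omega
    rw [Nat.succ_eq_add_one, h2]; exact depth_spec v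
  have hle : depth T (T.parent v) ≤ depth T v - 1 := depth_le hup
  have hge : depth T v ≤ depth T (T.parent v) + 1 := by
    apply depth_le
    rw [Function.iterate_succ_apply]
    exact depth_spec (T.parent v)
  omega

lemma depth_child {k w : Fin d} (hw : w ∈ T.children k) :
    depth T w = depth T k + 1 := by
  obtain ⟨h1, h2, h3⟩ := hw
  rw [depth_parent h1, h3]

lemma child_of_depth {j : Fin d} {m : ℕ} (hj : depth T j = m + 1) :
    depth T (T.parent j) = m ∧ j ∈ T.children (T.parent j) := by
  have hjr : j ≠ T.root := by
    intro h; rw [h, depth_root] at hj; omega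
  have hpar : depth T (T.parent j) = m := by
    have := depth_parent hjr; omega
  refine ⟨hpar, hjr, ?_, rfl⟩
  intro h
  exact hjr (eq_root_of_parent_eq h.symm)

lemma depth_lt (v : Fin d) : depth T v < d := by
  have key : ∀ a b : ℕ, a < b → T.parent^[a] v = T.parent^[b] v → depth T v ≤ a := by
    intro a b hab heq
    have hper : T.parent^[b - a] (T.parent^[a] v) = T.parent^[a] v := by
      rw [← Function.iterate_add_apply]
      have : b - a + a = b := by omega
      rw [this, heq]
    exact depth_le (eq_root_of_periodic (by omega) hper)
  have hinj : Function.Injective (fun i : Fin (depth T v + 1) => T.parent^[(i : ℕ)] v) := by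
    intro i j hij
    have hij' : T.parent^[(i : ℕ)] v = T.parent^[(j : ℕ)] v := hij
    apply Fin.ext
    have hi := i.isLt
    have hj := j.isLt
    rcases Nat.lt_trichotomy (i : ℕ) (j : ℕ) with h | h | h
    · have := key _ _ h hij'; omega
    · exact h
    · have := key _ _ h hij'.symm; omega
  have := Fintype.card_le_of_injective _ hinj
  simpa using this

end TTNSAux
namespace TTNSAux

open ParentTree Function

variable {d : ℕ} {T : ParentTree d}

/-- The closed subtree at `k` : descendants together with `k` itself. -/
def Dset (T : ParentTree d) (k : Fin d) : Set (Fin d) := T.desc k ∪ {k}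

lemma mem_Dset_self (k : Fin d) : k ∈ Dset T k := Or.inr rfl

lemma Dset_root_eq_univ : Dset T T.root = Set.univ := by
  ext v
  simp only [Dset, Set.mem_union, Set.mem_singleton_iff, Set.mem_univ, iff_true]
  by_cases hv : v = T.root
  · exact Or.inr hv
  · refine Or.inl ⟨hv, depth T v, ?_, depth_spec v⟩
    rcases Nat.eq_zero_or_pos (depth T v) with h | h
    · exact absurd (depth_eq_zero_iff.mp h) hv
    · exact h

lemma child_Dset_subset_desc {k w : Fin d} (hw : w ∈ T.children k) :
    Dset T w ⊆ T.desc k := by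
  obtain ⟨hwr, hwk, hwp⟩ := hw
  rintro v (⟨hvw, m, hm, hit⟩ | rfl)
  · refine ⟨?_, m + 1, by omega, by rw [Function.iterate_succ_apply', hit, hwp]⟩
    intro hvkeq
    have hcyc : T.parent^[m + 1] w = w := by
      rw [Function.iterate_succ_apply, hwp, ← hvkeq, hit]
    exact hwr (eq_root_of_periodic (by omega) hcyc)
  · exact ⟨hwk, 1, le_refl _, by simpa using hwp⟩

lemma not_mem_child_Dset {k w : Fin d} (hw : w ∈ T.children k) : k ∉ Dset T w := by
  obtain ⟨hwr, hwk, hwp⟩ := hw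
  rintro (⟨hkw, m, hm, hit⟩ | rfl)
  · have hcyc : T.parent^[m + 1] w = w := by
      rw [Function.iterate_succ_apply, hwp, hit]
    exact hwr (eq_root_of_periodic (by omega) hcyc)
  · exact hwk rfl

lemma Dset_disjoint {k w1 w2 : Fin d} (h1 : w1 ∈ T.children k) (h2 : w2 ∈ T.children k)
    (hne : w1 ≠ w2) {v : Fin d} (hv1 : v ∈ Dset T w1) (hv2 : v ∈ Dset T w2) : False := by
  have reach : ∀ w, w ∈ T.children k → v ∈ Dset T w → ∃ a : ℕ, T.parent^[a] v = w := by
    rintro w hw (⟨hvw, m, hm, hit⟩ | rfl)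
    · exact ⟨m, hit⟩
    · exact ⟨0, rfl⟩
  obtain ⟨a, ha⟩ := reach w1 h1 hv1
  obtain ⟨b, hb⟩ := reach w2 h2 hv2
  have key : ∀ (u1 u2 : Fin d) (a b : ℕ), u1 ∈ T.children k → u2 ∈ T.children k →
      u1 ≠ u2 → T.parent^[a] v = u1 → T.parent^[b] v = u2 → a ≤ b → False := by
    intro u1 u2 a b hu1 hu2 hu12 h1' h2' hab
    obtain ⟨h1r, h1k, h1p⟩ := hu1
    obtain ⟨h2r, h2k, h2p⟩ := hu2
    have hiter : T.parent^[b - a] u1 = u2 := by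
      rw [← h1', ← Function.iterate_add_apply]
      have : b - a + a = b := by omega
      rw [this, h2']
    rcases Nat.eq_zero_or_pos (b - a) with h | h
    · rw [h] at hiter; exact hu12 hiter
    · -- parent^[b-a-1] k = u2, and parent u2 = k, so cycle at k of length b - a
      have hk2 : T.parent^[b - a - 1] k = u2 := by
        rw [← h1p, ← Function.iterate_succ_apply]
        have : b - a - 1 + 1 = b - a := by omega
        rw [Nat.succ_eq_add_one, this, hiter]
      have hcyc : T.parent^[b - a] k = k := by
        have : b - a = (b - a - 1) + 1 := by omega
        rw [this, Function.iterate_succ_apply', hk2, h2p]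
      have hkroot : k = T.root := eq_root_of_periodic (by omega) hcyc
      -- then u2 = parent^[b-a-1] root = root, contradiction
      apply h2r
      rw [← hk2, hkroot, iterate_parent_root]
  rcases Nat.le_total a b with h | h
  · exact key w1 w2 a b h1 h2 hne ha hb h
  · exact key w2 w1 b a h2 h1 hne.symm hb ha h

lemma desc_subset_children_union {k : Fin d} :
    T.desc k ⊆ ⋃ w ∈ T.children k, Dset T w := by
  rintro v ⟨hvk, hex⟩
  have hex' : ∃ m, 1 ≤ m ∧ T.parent^[m] v = k := hex
  set m₀ := Nat.find hex' with hm₀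
  obtain ⟨hm₀1, hm₀spec⟩ := Nat.find_spec hex'
  obtain ⟨w, hw⟩ : ∃ w, w = T.parent^[m₀ - 1] v := ⟨_, rfl⟩
  have hwp : T.parent w = k := by
    rw [hw, ← Function.iterate_succ_apply' T.parent]
    have h5 : m₀ - 1 + 1 = m₀ := by omega
    rw [Nat.succ_eq_add_one, h5, hm₀spec]
  have hwk : w ≠ k := by
    intro h
    rcases Nat.eq_zero_or_pos (m₀ - 1) with h0 | h0
    · rw [h0] at hw
      exact hvk ((hw.symm.trans h :))
    · have := Nat.find_min hex' (m := m₀ - 1) (by omega)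
      exact this ⟨by omega, hw.symm.trans h⟩
  have hwr : w ≠ T.root := by
    intro h
    apply hwk
    rw [← hwp, h, T.parent_root, ← h]
  have hwchild : w ∈ T.children k := ⟨hwr, hwk, hwp⟩
  refine Set.mem_biUnion hwchild ?_
  rcases eq_or_ne v w with rfl | hvw
  · exact mem_Dset_self _
  · rcases Nat.eq_zero_or_pos (m₀ - 1) with h0 | h0
    · rw [h0] at hw
      exact absurd (hw : w = v).symm hvw
    · exact Or.inl ⟨hvw, m₀ - 1, by omega, hw.symm⟩

lemma child_ne_root {k w : Fin d} (hw : w ∈ T.children k) : w ≠ T.root := hw.1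

end TTNSAux
namespace TTNSAux

open Set Submodule Function Matrix

variable {d : ℕ} {n : Fin d → ℕ}

/-- merge two full index vectors along a set `S`. -/
def merge (n : Fin d → ℕ) (S : Set (Fin d)) (x y : ∀ i, Fin (n i)) : ∀ i, Fin (n i) :=
  fun i => if i ∈ S then x i else y i

lemma merge_self (S : Set (Fin d)) (x : ∀ i, Fin (n i)) : merge n S x x = x := by
  funext i; unfold merge; split <;> rfl

lemma merge_merge (S : Set (Fin d)) (x y z : ∀ i, Fin (n i)) :
    merge n S (merge n S x z) y = merge n S x y := by
  funext i; unfold merge; split <;> simp_all [merge]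

lemma merge_comm (S S' : Set (Fin d)) (hdisj : ∀ i, i ∈ S → i ∈ S' → False)
    (z u x : ∀ i, Fin (n i)) :
    merge n S z (merge n S' u x) = merge n S' u (merge n S z x) := by
  funext i; unfold merge
  by_cases h1 : i ∈ S <;> by_cases h2 : i ∈ S'
  · exact (hdisj i h1 h2).elim
  · simp [h1, h2]
  · simp [h1, h2]
  · simp [h1, h2]

/-- functions depending only on coordinates in `S` form a submodule. -/
def depSub (n : Fin d → ℕ) (S : Set (Fin d)) : Submodule ℝ ((∀ i, Fin (n i)) → ℝ) where
  carrier := {f | ∀ x y, f (merge n S x y) = f x}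
  add_mem' := by intro f g hf hg x y; simp [hf x y, hg x y]
  zero_mem' := by intro x y; rfl
  smul_mem' := by intro c f hf x y; simp [hf x y]

/-- the columns of the unfolding along `S`, as functions on the full index set. -/
def colF (p : (∀ i, Fin (n i)) → ℝ) (S : Set (Fin d)) (y : ∀ i, Fin (n i)) :
    (∀ i, Fin (n i)) → ℝ := fun x => p (merge n S x y)

/-- span of the columns of the unfolding along `S`. -/
def ColSp (p : (∀ i, Fin (n i)) → ℝ) (S : Set (Fin d)) :
    Submodule ℝ ((∀ i, Fin (n i)) → ℝ) :=
  Submodule.span ℝ (Set.range (colF p S))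

lemma colF_mem_depSub (p : (∀ i, Fin (n i)) → ℝ) (S : Set (Fin d)) (y : ∀ i, Fin (n i)) :
    colF p S y ∈ depSub n S := by
  intro x z
  unfold colF
  rw [merge_merge]

lemma ColSp_le_depSub (p : (∀ i, Fin (n i)) → ℝ) (S : Set (Fin d)) :
    ColSp p S ≤ depSub n S := by
  rw [ColSp, Submodule.span_le]
  rintro _ ⟨y, rfl⟩
  exact colF_mem_depSub p S y

lemma finrank_ColSp_le (p : (∀ i, Fin (n i)) → ℝ) (S : Set (Fin d))
    (x₀ : ∀ i, Fin (n i)) :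
    Module.finrank ℝ (ColSp p S) ≤ (unfoldMatrix p S).rank := by
  classical
  set M := unfoldMatrix p S with hM
  -- the linear map extending functions of the S-coordinates to the full index set
  let Φ : (((i : S) → Fin (n i.1)) → ℝ) →ₗ[ℝ] ((∀ i, Fin (n i)) → ℝ) :=
    { toFun := fun g => fun x => g (fun i => x i.1)
      map_add' := by intros; rfl
      map_smul' := by intros; rfl }
  have hrange : Set.range (colF p S) = Φ '' (Set.range Mᵀ) := by
    ext f
    constructor
    · rintro ⟨y, rfl⟩
      refine ⟨Mᵀ (fun j => y j.1), ⟨_, rfl⟩, ?_⟩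
      funext x
      congr 1
    · rintro ⟨_, ⟨ySc, rfl⟩, rfl⟩
      refine ⟨fun i => if h : i ∈ Sᶜ then ySc ⟨i, h⟩ else x₀ i, ?_⟩
      funext x
      show p _ = p _
      congr 1
      funext i
      by_cases h : i ∈ S
      · simp [merge, h, unfoldMatrix]
      · simp [merge, h, unfoldMatrix, Set.mem_compl_iff]
  have hcolsp : ColSp p S = Submodule.map Φ (Submodule.span ℝ (Set.range Mᵀ)) := by
    rw [ColSp, hrange, Submodule.map_span]
  rw [hcolsp, Matrix.rank_eq_finrank_span_cols]
  exact Submodule.finrank_map_le Φ _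

/-- a subspace of `finrank ≤ m` admits a spanning family of size `m`. -/
lemma exists_spanning_family {V : Type*} [AddCommGroup V] [Module ℝ V]
    [FiniteDimensional ℝ V] (U : Submodule ℝ V) {m : ℕ}
    (h : Module.finrank ℝ U ≤ m) :
    ∃ ψ : Fin m → V, (∀ i, ψ i ∈ U) ∧ U ≤ Submodule.span ℝ (Set.range ψ) := by
  classical
  let b := Module.finBasis ℝ U
  refine ⟨fun i => if hi : (i : ℕ) < Module.finrank ℝ U then (b ⟨i, hi⟩ : V) else 0, ?_, ?_⟩
  · intro i
    by_cases hi : (i : ℕ) < Module.finrank ℝ U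
    · simp only [dif_pos hi]
      exact Submodule.coe_mem _
    · simp only [dif_neg hi]
      exact Submodule.zero_mem U
  · intro v hv
    have hrepr := b.sum_repr ⟨v, hv⟩
    have : (v : V) = ∑ j : Fin (Module.finrank ℝ U), (b.repr ⟨v, hv⟩ j : ℝ) • (b j : V) := by
      conv_lhs => rw [show v = ((⟨v, hv⟩ : U) : V) from rfl, ← hrepr]
      push_cast
      rfl
    rw [this]
    apply Submodule.sum_mem
    intro j _
    apply Submodule.smul_mem
    apply Submodule.subset_span
    refine ⟨⟨(j : ℕ), by omega⟩, ?_⟩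
    simp only [Fin.val_mk, dif_pos j.isLt, Fin.eta]

/-- any linear functional on a finite function space is a combination of evaluations. -/
lemma eval_expand {X : Type*} [Fintype X] [DecidableEq X]
    (L : (X → ℝ) →ₗ[ℝ] ℝ) (f : X → ℝ) :
    L f = ∑ z : X, f z * L (fun z' => if z' = z then 1 else 0) := by
  have hf : f = ∑ z : X, f z • (fun z' => if z' = z then (1 : ℝ) else 0) := by
    funext x
    rw [Finset.sum_apply]
    simp [Finset.sum_ite_eq', mul_comm]
  conv_lhs => rw [hf]
  rw [map_sum]
  congr 1
  funext z
  rw [_root_.map_smul]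
  rfl

end TTNSAux
namespace TTNSAux

open Set Submodule Function

lemma tensor_span {d : ℕ} {n : Fin d → ℕ} [Nonempty (∀ i, Fin (n i))]
    {ι : Type} [Fintype ι] (S : ι → Set (Fin d))
    (hdisj : ∀ j j' : ι, j ≠ j' → ∀ a, a ∈ S j → a ∈ S j' → False)
    (κ : ι → Type) [∀ j, Fintype (κ j)] [∀ j, Nonempty (κ j)]
    (ψ : ∀ j, κ j → ((∀ i, Fin (n i)) → ℝ))
    (s : Finset ι) (g : (∀ i, Fin (n i)) → ℝ)
    (hgdep : ∀ x y, (∀ j ∈ s, ∀ i ∈ S j, x i = y i) → g x = g y)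
    (hgfib : ∀ j ∈ s, ∀ x,
      (fun u => g (merge n (S j) u x)) ∈ Submodule.span ℝ (Set.range (ψ j))) :
    g ∈ Submodule.span ℝ
      (Set.range (fun β : ∀ j, κ j => fun x => ∏ j ∈ s, ψ j (β j) x)) := by
  classical
  induction s using Finset.induction_on generalizing g with
  | empty =>
      have hconst : g = (g (Classical.arbitrary _)) • (fun _ => (1 : ℝ)) := by
        funext x
        have := hgdep x (Classical.arbitrary _) (by simp)
        simp [this]
      rw [hconst]
      exact Submodule.smul_mem _ _ (Submodule.subset_span
        ⟨fun j => Classical.arbitrary _, by funext x; simp⟩)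
  | @insert j₀ s hj₀ ih =>
      have hne : ∀ j ∈ s, j ≠ j₀ := fun j hj => ne_of_mem_of_not_mem hj hj₀
      set U : Submodule ℝ ((∀ i, Fin (n i)) → ℝ) :=
        Submodule.span ℝ (Set.range (ψ j₀)) with hU
      let b := Module.finBasis ℝ U
      -- extended coordinate functionals
      have hext : ∀ i, ∃ L : ((∀ i, Fin (n i)) → ℝ) →ₗ[ℝ] ℝ,
          ∀ u : U, L u = b.coord i u := by
        intro i
        obtain ⟨L, hL⟩ := LinearMap.exists_extend (b.coord i)
        exact ⟨L, fun u => DFunLike.congr_fun hL u⟩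
      choose L hL using hext
      have hLrepr : ∀ (i) (v) (hv : v ∈ U), L i v = b.repr ⟨v, hv⟩ i := by
        intro i v hv
        have h0 := hL i ⟨v, hv⟩
        rw [Module.Basis.coord_apply] at h0
        exact h0
      have hval : ∀ (v) (hv : v ∈ U) (x), v x = ∑ i, L i v * (b i).1 x := by
        intro v hv x
        have h1 := b.sum_repr ⟨v, hv⟩
        have h2 : v = ((∑ i, b.repr ⟨v, hv⟩ i • b i : U) : ((∀ i, Fin (n i)) → ℝ)) := by
          rw [h1]
        have h3 : ((∑ i, b.repr ⟨v, hv⟩ i • b i : U) : ((∀ i, Fin (n i)) → ℝ)) x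
            = ∑ i, b.repr ⟨v, hv⟩ i * (b i).1 x := by
          push_cast
          rw [Finset.sum_apply]
          simp
        conv_lhs => rw [h2]
        rw [h3]
        apply Finset.sum_congr rfl
        intro i _
        rw [hLrepr i v hv]
      set fib : (∀ i, Fin (n i)) → ((∀ i, Fin (n i)) → ℝ) :=
        fun x => fun u => g (merge n (S j₀) u x) with hfibdef
      have hfib : ∀ x, fib x ∈ U := hgfib j₀ (Finset.mem_insert_self _ _)
      set h : Fin (Module.finrank ℝ U) → ((∀ i, Fin (n i)) → ℝ) :=
        fun i => fun x => L i (fib x) with hhdef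
      have key : ∀ x, g x = ∑ i, h i x * (b i).1 x := by
        intro x
        have h1 : g x = fib x x := by
          rw [hfibdef]
          simp only []
          rw [merge_self]
        rw [h1]
        exact hval (fib x) (hfib x) x
      -- each coefficient function lies in the span of s-products
      have hmem : ∀ i, h i ∈ Submodule.span ℝ
          (Set.range (fun β : ∀ j, κ j => fun x => ∏ j ∈ s, ψ j (β j) x)) := by
        intro i
        apply ih
        · intro x y hxy
          have hfibeq : fib x = fib y := by
            funext u
            apply hgdep
            intro j hj i' hi'
            rcases Finset.mem_insert.mp hj with rfl | hjs
            · unfold merge; simp only [if_pos hi']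
            · have hni : i' ∉ S j₀ := fun h' => hdisj j j₀ (hne j hjs) i' hi' h'
              unfold merge
              rw [if_neg hni, if_neg hni]
              exact hxy j hjs i' hi'
          simp only [hhdef, hfibeq]
        · intro j hjs x
          have hexp : (fun u => h i (merge n (S j) u x))
              = ∑ z, (L i (fun z' => if z' = z then 1 else 0)) •
                  (fun u => g (merge n (S j) u (merge n (S j₀) z x))) := by
            funext u
            rw [Finset.sum_apply]
            simp only [hhdef]
            rw [eval_expand (L i) (fib (merge n (S j) u x))]
            apply Finset.sum_congr rfl
            intro z _
            simp only [hfibdef, Pi.smul_apply, smul_eq_mul]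
            rw [mul_comm]
            congr 1
            rw [merge_comm]
            intro a ha1 ha2
            exact hdisj j₀ j (Ne.symm (hne j hjs)) a ha1 ha2
          rw [hexp]
          apply Submodule.sum_mem
          intro z _
          exact Submodule.smul_mem _ _
            (hgfib j (Finset.mem_insert_of_mem hjs) (merge n (S j₀) z x))
      -- assemble
      have hgsum : g = ∑ i, h i * (b i).1 := by
        funext x
        rw [Finset.sum_apply]
        rw [key x]
        apply Finset.sum_congr rfl
        intro i _
        rfl
      rw [hgsum]
      apply Submodule.sum_mem
      intro i _
      have hprod := Submodule.mul_mem_mul (hmem i) (Submodule.coe_mem (b i))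
      rw [Submodule.span_mul_span] at hprod
      refine Submodule.span_le.mpr ?_ hprod
      rintro f ⟨f1, ⟨β, rfl⟩, f2, ⟨a, rfl⟩, rfl⟩
      apply Submodule.subset_span
      refine ⟨Function.update β j₀ a, ?_⟩
      funext x
      show ∏ j ∈ insert j₀ s, ψ j (Function.update β j₀ a j) x
          = (∏ j ∈ s, ψ j (β j) x) * ψ j₀ a x
      rw [Finset.prod_insert hj₀, Function.update_self, mul_comm]
      congr 1
      apply Finset.prod_congr rfl
      intro j hj
      rw [Function.update_of_ne (hne j hj)]

end TTNSAux
namespace TTNSAux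

open Set Submodule Function

variable {d : ℕ}

lemma exists_cores (T : ParentTree d) (n r : Fin d → ℕ)
    (hn : ∀ k, 1 ≤ n k) (hr : ∀ w, 1 ≤ r w)
    (p : (∀ i, Fin (n i)) → ℝ)
    (φ : ∀ k : Fin d, Fin (r k) → ((∀ i, Fin (n i)) → ℝ))
    (hφa : ∀ k α, φ k α ∈ ColSp p (Dset T k))
    (hφb : ∀ k : Fin d, k ≠ T.root →
      ColSp p (Dset T k) ≤ Submodule.span ℝ (Set.range (φ k))) :
    ∃ G : ∀ k : Fin d, ((w : T.children k) → Fin (r w.1)) → Fin (n k) → Fin (r k) → ℝ,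
      ∀ k α x, φ k α x = ∑ β : (w : T.children k) → Fin (r w.1),
        G k β (x k) α * ∏ w : T.children k, φ w.1 (β w) x := by
  classical
  haveI : Nonempty (∀ i, Fin (n i)) := ⟨fun i => ⟨0, hn i⟩⟩
  haveI : ∀ w : Fin d, Nonempty (Fin (r w)) := fun w => ⟨⟨0, hr w⟩⟩
  set F : ∀ k : Fin d, (((w : T.children k) → Fin (r w.1)) × Fin (n k)) →
      ((∀ i, Fin (n i)) → ℝ) := fun k q => fun x =>
        (if x k = q.2 then (1:ℝ) else 0) * ∏ w : T.children k, φ w.1 (q.1 w) x with hF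
  have hmem : ∀ (k : Fin d) (α : Fin (r k)),
      φ k α ∈ Submodule.span ℝ (Set.range (F k)) := by
    intro k α
    refine Submodule.span_le.mpr ?_ (hφa k α)
    rintro _ ⟨ycol, rfl⟩
    set g := colF p (Dset T k) ycol with hg
    have hsplit : g = ∑ cval : Fin (n k),
        (fun x => (if x k = cval then (1:ℝ) else 0) * g (Function.update x k cval)) := by
      funext x
      rw [Finset.sum_apply]
      symm
      rw [Finset.sum_eq_single (x k)]
      · simp
      · intro b _ hb
        show (if x k = b then (1:ℝ) else 0) * _ = 0
        rw [if_neg (fun h => hb h.symm), zero_mul]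
      · intro hx; exact absurd (Finset.mem_univ _) hx
    rw [hsplit]
    apply Submodule.sum_mem
    intro cval _
    set gc : (∀ i, Fin (n i)) → ℝ := fun x => g (Function.update x k cval) with hgc
    have hgcmem : gc ∈ Submodule.span ℝ
        (Set.range (fun β : ∀ w : T.children k, Fin (r w.1) =>
          fun x => ∏ w : T.children k, φ w.1 (β w) x)) := by
      apply tensor_span (S := fun w : T.children k => Dset T w.1)
        (κ := fun w : T.children k => Fin (r w.1)) (ψ := fun w => φ w.1)
        (s := Finset.univ)
      · -- disjointness
        intro w w' hne a h1 h2
        exact Dset_disjoint w.2 w'.2 (fun h => hne (Subtype.ext h)) h1 h2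
      · -- dependence of gc on the children subtrees only
        intro x y hxy
        show p _ = p _
        congr 1
        funext i
        unfold merge
        by_cases hik : i ∈ Dset T k
        · rw [if_pos hik, if_pos hik]
          by_cases hik2 : i = k
          · subst hik2; simp
          · rw [Function.update_of_ne hik2, Function.update_of_ne hik2]
            have hdesc : i ∈ T.desc k := by
              rcases hik with h | h
              · exact h
              · exact absurd h hik2
            obtain ⟨w, hw, hmemw⟩ := Set.mem_iUnion₂.mp (desc_subset_children_union hdesc)
            exact hxy ⟨w, hw⟩ (Finset.mem_univ _) i hmemw
        · rw [if_neg hik, if_neg hik]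
      · -- fibers of gc lie in the column spaces of the children
        intro w _ x
        have hcol : (fun u => gc (merge n (Dset T w.1) u x)) =
            colF p (Dset T w.1)
              (merge n (Dset T k) (Function.update x k cval) ycol) := by
          funext u
          show p _ = p _
          congr 1
          funext i
          unfold merge
          by_cases hiw : i ∈ Dset T w.1
          · have hik : i ∈ Dset T k := Or.inl (child_Dset_subset_desc w.2 hiw)
            have hink : i ≠ k := fun h => not_mem_child_Dset w.2 (h ▸ hiw)
            rw [if_pos hiw, if_pos hik, Function.update_of_ne hink, if_pos hiw]
          · rw [if_neg hiw]
            by_cases hik : i ∈ Dset T k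
            · rw [if_pos hik, if_pos hik]
              by_cases hik2 : i = k
              · subst hik2; simp
              · rw [Function.update_of_ne hik2, Function.update_of_ne hik2, if_neg hiw]
            · rw [if_neg hik, if_neg hik]
        rw [hcol]
        exact hφb w.1 (child_ne_root w.2) (Submodule.subset_span ⟨_, rfl⟩)
    -- multiply by the indicator of the physical index
    have hmap := Submodule.mem_map_of_mem
      (f := LinearMap.mulLeft ℝ (fun x : ∀ i, Fin (n i) =>
        if x k = cval then (1:ℝ) else 0)) hgcmem
    rw [Submodule.map_span] at hmap
    refine Submodule.span_le.mpr ?_ hmap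
    rintro _ ⟨_, ⟨β, rfl⟩, rfl⟩
    apply Submodule.subset_span
    exact ⟨(β, cval), rfl⟩
  have hcoef : ∀ (k : Fin d) (α : Fin (r k)),
      ∃ c : (((w : T.children k) → Fin (r w.1)) × Fin (n k)) → ℝ,
        ∑ q, c q • F k q = φ k α :=
    fun k α => (mem_span_range_iff_exists_fun ℝ).mp (hmem k α)
  choose c hc using hcoef
  refine ⟨fun k β xk α => c k α (β, xk), ?_⟩
  intro k α x
  have hx := congrFun (hc k α) x
  rw [Finset.sum_apply] at hx
  rw [← hx, Fintype.sum_prod_type]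
  apply Finset.sum_congr rfl
  intro β _
  rw [Finset.sum_eq_single (x k)]
  · simp [hF, mul_assoc]
  · intro b _ hb
    simp only [hF, Pi.smul_apply, smul_eq_mul]
    rw [if_neg (fun h => hb h.symm)]
    ring
  · intro hx'; exact absurd (Finset.mem_univ _) hx'

end TTNSAux
namespace TTNSAux

open Set Function

variable {d : ℕ}

lemma layering (T : ParentTree d) (n r : Fin d → ℕ) (hr : ∀ w, 1 ≤ r w)
    (hroot : r T.root = 1)
    (p : (∀ i, Fin (n i)) → ℝ)
    (φ : ∀ k : Fin d, Fin (r k) → ((∀ i, Fin (n i)) → ℝ))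
    (hφroot : ∀ α x, φ T.root α x = p x)
    (G : ∀ k : Fin d, ((w : T.children k) → Fin (r w.1)) → Fin (n k) → Fin (r k) → ℝ)
    (hrec : ∀ k α x, φ k α x = ∑ β : (w : T.children k) → Fin (r w.1),
        G k β (x k) α * ∏ w : T.children k, φ w.1 (β w) x) :
    ttnsContract T n r G = p := by
  classical
  funext x
  set Full : ℕ → ℝ := fun m => ∑ α : ∀ j : Fin d, Fin (r j),
      (∏ j ∈ Finset.univ.filter (fun j => depth T j < m),
        G j (fun w => α w.1) (x j) (α j)) *
      ∏ k ∈ Finset.univ.filter (fun k => depth T k = m), φ k (α k) x with hFull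
  -- Full 0
  have claim0 : Full 0 = (∏ j ∈ Finset.univ.filter (fun j => 0 < depth T j),
      (r j : ℝ)) * p x := by
    have h1 : Finset.univ.filter (fun j : Fin d => depth T j < 0) = ∅ := by
      ext j; simp
    have h2 : Finset.univ.filter (fun j : Fin d => depth T j = 0) = {T.root} := by
      ext j
      simp [depth_eq_zero_iff]
    rw [hFull]
    simp only [h1, h2, Finset.prod_empty, one_mul, Finset.prod_singleton]
    have h3 : ∀ α : ∀ j : Fin d, Fin (r j), φ T.root (α T.root) x = p x :=
      fun α => hφroot _ x
    rw [Finset.sum_congr rfl (fun α _ => h3 α), Finset.sum_const]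
    rw [Finset.card_univ, Fintype.card_pi, nsmul_eq_mul]
    have h5 : Finset.univ.filter (fun j : Fin d => ¬ 0 < depth T j) = {T.root} := by
      ext j
      simp only [Finset.mem_filter, Finset.mem_univ, true_and, Finset.mem_singleton,
        Nat.not_lt, Nat.le_zero]
      exact depth_eq_zero_iff
    congr 1
    have hcast : ((∏ j : Fin d, Fintype.card (Fin (r j)) : ℕ) : ℝ)
        = ∏ j : Fin d, (r j : ℝ) := by
      push_cast
      simp
    rw [hcast, ← Finset.prod_filter_mul_prod_filter_not Finset.univ
      (fun j => 0 < depth T j) (fun j => (r j : ℝ)), h5, Finset.prod_singleton, hroot]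
    simp
  -- the inductive step
  have step : ∀ m : ℕ, Full m =
      (∏ j ∈ Finset.univ.filter (fun j => depth T j = m + 1), (r j : ℝ)) * Full (m + 1) := by
    intro m
    -- expand the φ factors at depth m via the recurrence
    have h1 : ∀ α : ∀ j : Fin d, Fin (r j),
        ∏ k ∈ Finset.univ.filter (fun k => depth T k = m), φ k (α k) x
        = ∑ B : ∀ k : {k : Fin d // depth T k = m}, (w : T.children k.1) → Fin (r w.1),
            ∏ k : {k : Fin d // depth T k = m},
              (G k.1 (B k) (x k.1) (α k.1) * ∏ w : T.children k.1, φ w.1 (B k w) x) := by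
      intro α
      rw [Finset.prod_subtype (Finset.univ.filter (fun k => depth T k = m))
        (p := fun k => depth T k = m) (by intro k; simp) (fun k => φ k (α k) x)]
      rw [Finset.prod_congr rfl (fun k _ => hrec k.1 (α k.1) x)]
      rw [Finset.prod_univ_sum]
      rw [Fintype.piFinset_univ]
    have h2 : Full m = ∑ q : (∀ j : Fin d, Fin (r j)) ×
        (∀ k : {k : Fin d // depth T k = m}, (w : T.children k.1) → Fin (r w.1)),
        (∏ j ∈ Finset.univ.filter (fun j => depth T j < m),
          G j (fun w => q.1 w.1) (x j) (q.1 j)) *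
        ∏ k : {k : Fin d // depth T k = m},
          (G k.1 (q.2 k) (x k.1) (q.1 k.1) * ∏ w : T.children k.1, φ w.1 (q.2 k w) x) := by
      rw [hFull]
      simp only []
      rw [Fintype.sum_prod_type]
      apply Finset.sum_congr rfl
      intro α _
      rw [h1 α, Finset.mul_sum]
    -- the reindexing equivalence
    have hchild_depth : ∀ (k : {k : Fin d // depth T k = m}) (w : T.children k.1),
        depth T w.1 = m + 1 := by
      intro k w
      rw [depth_child w.2, k.2]
    let e : ((∀ j : Fin d, Fin (r j)) ×
          (∀ k : {k : Fin d // depth T k = m}, (w : T.children k.1) → Fin (r w.1)))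
        ≃ ((∀ j : Fin d, Fin (r j)) × (∀ j : {j : Fin d // depth T j = m + 1}, Fin (r j.1))) :=
      { toFun := fun q =>
          ⟨fun j => if h : depth T j = m + 1 then
              q.2 ⟨T.parent j, (child_of_depth h).1⟩ ⟨j, (child_of_depth h).2⟩
            else q.1 j,
           fun j => q.1 j.1⟩
        invFun := fun q =>
          ⟨fun j => if h : depth T j = m + 1 then q.2 ⟨j, h⟩ else q.1 j,
           fun k w => q.1 w.1⟩
        left_inv := by
          rintro ⟨α, B⟩
          refine Prod.ext ?_ ?_
          · funext j
            by_cases h : depth T j = m + 1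
            · simp only [dif_pos h]
            · simp only [dif_neg h]
          · funext k w
            obtain ⟨kv, hk⟩ := k
            obtain ⟨wv, hwv⟩ := w
            have hw1 : depth T wv = m + 1 := hchild_depth ⟨kv, hk⟩ ⟨wv, hwv⟩
            simp only [dif_pos hw1]
            have hp : T.parent wv = kv := hwv.2.2
            subst hp
            rfl
        right_inv := by
          rintro ⟨α', l⟩
          refine Prod.ext ?_ ?_
          · funext j
            by_cases h : depth T j = m + 1
            · simp only [dif_pos h]
            · simp only [dif_neg h]
          · funext j
            simp only [dif_pos j.2] }
    -- transport the sum along e.symm and identify the summands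
    have h3 := Equiv.sum_comp e.symm (fun q : (∀ j : Fin d, Fin (r j)) ×
        (∀ k : {k : Fin d // depth T k = m}, (w : T.children k.1) → Fin (r w.1)) =>
        (∏ j ∈ Finset.univ.filter (fun j => depth T j < m),
          G j (fun w => q.1 w.1) (x j) (q.1 j)) *
        ∏ k : {k : Fin d // depth T k = m},
          (G k.1 (q.2 k) (x k.1) (q.1 k.1) * ∏ w : T.children k.1, φ w.1 (q.2 k w) x))
    rw [h2, ← h3]
    -- now compute the composed summand
    have h4 : ∀ q : (∀ j : Fin d, Fin (r j)) ×
        (∀ j : {j : Fin d // depth T j = m + 1}, Fin (r j.1)),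
        (∏ j ∈ Finset.univ.filter (fun j => depth T j < m),
          G j (fun w => (e.symm q).1 w.1) (x j) ((e.symm q).1 j)) *
        ∏ k : {k : Fin d // depth T k = m},
          (G k.1 ((e.symm q).2 k) (x k.1) ((e.symm q).1 k.1) *
            ∏ w : T.children k.1, φ w.1 ((e.symm q).2 k w) x)
        = (∏ j ∈ Finset.univ.filter (fun j => depth T j < m + 1),
            G j (fun w => q.1 w.1) (x j) (q.1 j)) *
          ∏ k ∈ Finset.univ.filter (fun k => depth T k = m + 1), φ k (q.1 k) x := by
      intro q
      obtain ⟨α', l⟩ := q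
      have hα : ∀ j : Fin d, depth T j ≠ m + 1 → (e.symm (α', l)).1 j = α' j := by
        intro j h
        show (if h : depth T j = m + 1 then _ else _) = α' j
        rw [dif_neg h]
      have hB : ∀ (k : {k : Fin d // depth T k = m}) (w : T.children k.1),
          (e.symm (α', l)).2 k w = α' w.1 := fun k w => rfl
      -- (a) the depth-< m product
      have ha : (∏ j ∈ Finset.univ.filter (fun j => depth T j < m),
          G j (fun w => (e.symm (α', l)).1 w.1) (x j) ((e.symm (α', l)).1 j))
          = ∏ j ∈ Finset.univ.filter (fun j => depth T j < m),
            G j (fun w => α' w.1) (x j) (α' j) := by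
        apply Finset.prod_congr rfl
        intro j hj
        simp only [Finset.mem_filter] at hj
        have hjd : depth T j < m := hj.2
        have e1 : (fun w : T.children j => (e.symm (α', l)).1 w.1)
            = fun w : T.children j => α' w.1 := by
          funext w
          apply hα
          rw [depth_child w.2]
          omega
        rw [e1, hα j (by omega)]
      -- (b) the depth-= m product, split into G-factors and φ-factors
      have hb : (∏ k : {k : Fin d // depth T k = m},
          (G k.1 ((e.symm (α', l)).2 k) (x k.1) ((e.symm (α', l)).1 k.1) *
            ∏ w : T.children k.1, φ w.1 ((e.symm (α', l)).2 k w) x))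
          = (∏ k ∈ Finset.univ.filter (fun k => depth T k = m),
              G k (fun w => α' w.1) (x k) (α' k)) *
            ∏ k ∈ Finset.univ.filter (fun k => depth T k = m + 1), φ k (α' k) x := by
        rw [Finset.prod_mul_distrib]
        congr 1
        · rw [Finset.prod_subtype (Finset.univ.filter (fun k => depth T k = m))
            (p := fun k => depth T k = m) (by intro k; simp)
            (fun k => G k (fun w => α' w.1) (x k) (α' k))]
          apply Finset.prod_congr rfl
          intro k _
          have h7 : (e.symm (α', l)).1 k.1 = α' k.1 := hα k.1 (by rw [k.2]; omega)
          show G k.1 (fun w => α' w.1) (x k.1) ((e.symm (α', l)).1 k.1) = _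
          rw [h7]
        · -- reindex the double product over children
          have hpart : Finset.univ.filter (fun j : Fin d => depth T j = m + 1)
              = (Finset.univ.filter (fun k : Fin d => depth T k = m)).biUnion
                  (fun k => Finset.univ.filter (fun j => j ∈ T.children k)) := by
            ext j
            simp only [Finset.mem_biUnion, Finset.mem_filter, Finset.mem_univ, true_and]
            constructor
            · intro h
              exact ⟨T.parent j, (child_of_depth h).1, (child_of_depth h).2⟩
            · rintro ⟨k, hk, hjk⟩
              rw [depth_child hjk, hk]
          have hdisj : (↑(Finset.univ.filter (fun k : Fin d => depth T k = m)) :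
              Set (Fin d)).PairwiseDisjoint
              (fun k => Finset.univ.filter (fun j => j ∈ T.children k)) := by
            intro k1 _ k2 _ hne
            simp only [Function.onFun]
            rw [Finset.disjoint_left]
            intro a ha1 ha2
            simp only [Finset.mem_filter, Finset.mem_univ, true_and] at ha1 ha2
            exact hne (ha1.2.2 ▸ ha2.2.2)
          show (∏ k : {k : Fin d // depth T k = m},
              ∏ w : T.children k.1, φ w.1 (α' w.1) x)
            = ∏ k ∈ Finset.univ.filter (fun k => depth T k = m + 1), φ k (α' k) x
          rw [hpart, Finset.prod_biUnion hdisj]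
          rw [Finset.prod_subtype (Finset.univ.filter (fun k => depth T k = m))
            (p := fun k => depth T k = m) (by intro k; simp)
            (fun k => ∏ j ∈ Finset.univ.filter (fun j => j ∈ T.children k), φ j (α' j) x)]
          apply Finset.prod_congr rfl
          intro k _
          exact (Finset.prod_subtype (Finset.univ.filter (fun j => j ∈ T.children k.1))
            (p := fun j => j ∈ T.children k.1) (by intro j; simp)
            (fun j => φ j (α' j) x)).symm
      rw [ha, hb]
      -- (c) merge the two G-products
      have hc : Finset.univ.filter (fun j : Fin d => depth T j < m + 1)
          = Finset.univ.filter (fun j : Fin d => depth T j < m) ∪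
            Finset.univ.filter (fun j : Fin d => depth T j = m) := by
        ext j
        simp only [Finset.mem_union, Finset.mem_filter, Finset.mem_univ, true_and]
        omega
      have hcdisj : Disjoint (Finset.univ.filter (fun j : Fin d => depth T j < m))
          (Finset.univ.filter (fun j : Fin d => depth T j = m)) := by
        rw [Finset.disjoint_left]
        intro a h1 h2
        simp only [Finset.mem_filter, Finset.mem_univ, true_and] at h1 h2
        omega
      rw [hc, Finset.prod_union hcdisj]
      ring
    rw [Finset.sum_congr rfl (fun q _ => h4 q)]
    -- the l-component of the sum is free
    rw [Fintype.sum_prod_type]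
    have h6 : ∀ α' : ∀ j : Fin d, Fin (r j),
        (∑ _l : ∀ j : {j : Fin d // depth T j = m + 1}, Fin (r j.1),
          (∏ j ∈ Finset.univ.filter (fun j => depth T j < m + 1),
            G j (fun w => α' w.1) (x j) (α' j)) *
          ∏ k ∈ Finset.univ.filter (fun k => depth T k = m + 1), φ k (α' k) x)
        = (∏ j ∈ Finset.univ.filter (fun j => depth T j = m + 1), (r j : ℝ)) *
          ((∏ j ∈ Finset.univ.filter (fun j => depth T j < m + 1),
            G j (fun w => α' w.1) (x j) (α' j)) *
          ∏ k ∈ Finset.univ.filter (fun k => depth T k = m + 1), φ k (α' k) x) := by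
      intro α'
      rw [Finset.sum_const, Finset.card_univ, nsmul_eq_mul]
      congr 1
      rw [Fintype.card_pi]
      simp only [Fintype.card_fin]
      rw [Nat.cast_prod]
      exact (Finset.prod_subtype
        (Finset.univ.filter (fun j : Fin d => depth T j = m + 1))
        (p := fun j => depth T j = m + 1) (by intro j; simp)
        (fun j => (r j : ℝ))).symm
    rw [Finset.sum_congr rfl (fun α' _ => h6 α'), ← Finset.mul_sum]
  -- main downward induction
  have hind : ∀ m : ℕ, Full m =
      (∏ j ∈ Finset.univ.filter (fun j => m < depth T j), (r j : ℝ)) * p x := by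
    intro m
    induction m with
    | zero => exact claim0
    | succ m ih =>
        have hpos : (0:ℝ) < ∏ j ∈ Finset.univ.filter
            (fun j => depth T j = m + 1), (r j : ℝ) := by
          apply Finset.prod_pos
          intro j _
          exact_mod_cast Nat.lt_of_lt_of_le Nat.zero_lt_one (hr j)
        apply mul_left_cancel₀ (ne_of_gt hpos)
        rw [← step m, ih]
        have hsplit : Finset.univ.filter (fun j : Fin d => m < depth T j)
            = Finset.univ.filter (fun j : Fin d => depth T j = m + 1) ∪
              Finset.univ.filter (fun j : Fin d => m + 1 < depth T j) := by
          ext j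
          simp only [Finset.mem_union, Finset.mem_filter, Finset.mem_univ, true_and]
          omega
        have hdisj2 : Disjoint
            (Finset.univ.filter (fun j : Fin d => depth T j = m + 1))
            (Finset.univ.filter (fun j : Fin d => m + 1 < depth T j)) := by
          rw [Finset.disjoint_left]
          intro a h1 h2
          simp only [Finset.mem_filter, Finset.mem_univ, true_and] at h1 h2
          omega
        rw [hsplit, Finset.prod_union hdisj2, mul_assoc]
  -- conclusion
  have hd : Full d = ttnsContract T n r G x := by
    rw [hFull]
    simp only []
    have h1 : Finset.univ.filter (fun j : Fin d => depth T j < d) = Finset.univ := by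
      ext j; simp [depth_lt j]
    have h2 : Finset.univ.filter (fun j : Fin d => depth T j = d) = ∅ := by
      ext j
      simp only [Finset.mem_filter, Finset.mem_univ, true_and, Finset.notMem_empty,
        iff_false]
      have := depth_lt (T := T) j
      omega
    rw [h1, h2]
    simp [ttnsContract]
  have h3 : Finset.univ.filter (fun j : Fin d => d < depth T j) = ∅ := by
    ext j
    simp only [Finset.mem_filter, Finset.mem_univ, true_and, Finset.notMem_empty,
      iff_false]
    have := depth_lt (T := T) j
    omega
  have hfin := hind d
  rw [hd, h3, Finset.prod_empty, one_mul] at hfin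
  exact hfin

end TTNSAux

open TTNSAux

/-- if every unfolding `p(x_{L(w)∪{w}}; x_{R(w)})` at a non-root node `w`
has rank at most `r w`, then `p` admits a TTNS representation with these bond
dimensions. -/
theorem ttns_existence {d : ℕ} (T : ParentTree d) (n r : Fin d → ℕ)
    (hn : ∀ k, 1 ≤ n k) (hr : ∀ w, 1 ≤ r w) (hroot : r T.root = 1)
    (p : (∀ i, Fin (n i)) → ℝ)
    (hrank : ∀ w : Fin d, w ≠ T.root →
      (unfoldMatrix p (T.desc w ∪ {w})).rank ≤ r w) :
    ∃ G : ∀ k : Fin d, ((w : T.children k) → Fin (r w.1)) → Fin (n k) → Fin (r k) → ℝ,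
      ttnsContract T n r G = p := by
  classical
  haveI : Nonempty (∀ i, Fin (n i)) := ⟨fun i => ⟨0, hn i⟩⟩
  set x₀ : ∀ i, Fin (n i) := fun i => ⟨0, hn i⟩ with hx₀
  have hφ : ∀ k : Fin d, ∃ φk : Fin (r k) → ((∀ i, Fin (n i)) → ℝ),
      (∀ α, φk α ∈ ColSp p (Dset T k)) ∧
      (k ≠ T.root → ColSp p (Dset T k) ≤ Submodule.span ℝ (Set.range φk)) ∧
      (k = T.root → ∀ α x, φk α x = p x) := by
    intro k
    by_cases hk : k = T.root
    · subst hk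
      refine ⟨fun _ => p, ?_, fun h => absurd rfl h, fun _ α x => rfl⟩
      intro α
      have hcol : p = colF p (Dset T T.root) x₀ := by
        funext x
        unfold colF
        congr 1
        funext i
        unfold merge
        rw [if_pos (by rw [Dset_root_eq_univ]; trivial)]
      show p ∈ ColSp p (Dset T T.root)
      have hm : colF p (Dset T T.root) x₀ ∈ ColSp p (Dset T T.root) :=
        Submodule.subset_span ⟨x₀, rfl⟩
      rwa [← hcol] at hm
    · have hfr : Module.finrank ℝ (ColSp p (Dset T k)) ≤ r k := by
        refine le_trans (finrank_ColSp_le p (Dset T k) x₀) ?_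
        refine Eq.trans_le ?_ (hrank k hk)
        unfold Dset
        congr!
      obtain ⟨ψ, h1, h2⟩ := exists_spanning_family _ hfr
      exact ⟨ψ, h1, fun _ => h2, fun h => absurd h hk⟩
  choose φ hφa hφb hφroot using hφ
  obtain ⟨G, hrec⟩ := exists_cores T n r hn hr p φ hφa hφb
  exact ⟨G, layering T n r hr hroot p φ (hφroot T.root rfl) G hrec⟩
end
end

section
/- Let a rooted tree on {1,…,d} be given, and suppose p : ∏_{i=1}^d [n_i] → ℝ factorizes as a graphical model over the tree, i.e. p(x) = φ(x_{r₀}) · ∏_{k ≠ r₀} ψ_k(x_k, x_{P(k)}) for some functions φ : [n_{r₀}] → ℝ and ψ_k : [n_k] × [n_{P(k)}] → ℝ. Then for every non-root node w, the unfolding matrix p(x_{L(w)∪{w}}; x_{R(w)}) has rank at most min(n_w, n_{P(w)}); in particular, p satisfies the TTNS low-rank condition with bond dimension n := max_k n_k at every edge of the tree. -/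
open scoped Classical

noncomputable section

namespace ParentTree
variable {d : ℕ} (T : ParentTree d)

lemma iterate_root (m : ℕ) : T.parent^[m] T.root = T.root :=
  Function.iterate_fixed T.parent_root m

lemma eq_root_of_iterate_eq {v : Fin d} {m : ℕ} (hm : 1 ≤ m)
    (h : T.parent^[m] v = v) : v = T.root := by
  obtain ⟨j, hj⟩ := T.reaches_root v
  have hcyc : ∀ k : ℕ, T.parent^[k * m] v = v := by
    intro k; induction k with
    | zero => simp
    | succ k ih =>
      rw [Nat.succ_mul, Function.iterate_add_apply, h, ih]
  have hk : j ≤ (j + 1) * m := by nlinarith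
  calc v = T.parent^[(j+1)*m] v := (hcyc _).symm
    _ = T.parent^[(j+1)*m - j] (T.parent^[j] v) := by
        rw [← Function.iterate_add_apply]; congr 1; omega
    _ = T.root := by rw [hj, iterate_root]

variable {T} {w : Fin d}

lemma root_not_mem (hw : w ≠ T.root) : T.root ∉ T.desc w ∪ {w} := by
  rintro (⟨h1, m, hm, h2⟩ | h)
  · exact h1 (by rw [iterate_root] at h2; exact h2.symm ▸ rfl) |>.elim
  · exact hw (by simpa using h.symm)

lemma parent_not_mem_of_desc (hw : w ≠ T.root) : T.parent w ∉ T.desc w ∪ {w} := by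
  rintro (⟨h1, m, hm, h2⟩ | h)
  · have : T.parent^[m+1] w = w := by
      rw [Function.iterate_succ_apply, h2]
    exact hw (eq_root_of_iterate_eq T (by omega) this)
  · have hpw : T.parent w = w := by simpa using h
    have : T.parent^[1] w = w := by simpa using hpw
    exact hw (eq_root_of_iterate_eq T le_rfl this)

lemma parent_mem_of_mem_desc (hw : w ≠ T.root) {k : Fin d} (hk : k ∈ T.desc w) :
    T.parent k ∈ T.desc w ∪ {w} := by
  obtain ⟨h1, m, hm, h2⟩ := hk
  by_cases hpk : T.parent k = w
  · exact Or.inr (by simp [hpk])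
  · left
    refine ⟨hpk, m - 1, ?_, ?_⟩
    · rcases hm.lt_or_eq with h | h
      · omega
      · exfalso; apply hpk
        have : T.parent^[1] k = w := by rw [h]; exact h2
        simpa using this
    · have : T.parent^[m-1] (T.parent k) = T.parent^[m] k := by
        rw [← Function.iterate_succ_apply]; congr 1; omega
      rw [this, h2]

lemma parent_not_mem_of_not_mem (hw : w ≠ T.root) {k : Fin d} (hk : k ∉ T.desc w ∪ {w}) :
    T.parent k ∉ T.desc w ∪ {w} := by
  have hkw : k ≠ w := fun h => hk (Or.inr (by simp [h]))
  rintro (⟨h1, m, hm, h2⟩ | h)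
  · exact hk (Or.inl ⟨hkw, m + 1, by omega,
      by rwa [Function.iterate_succ_apply]⟩)
  · have : T.parent k = w := by simpa using h
    exact hk (Or.inl ⟨hkw, 1, le_rfl, by simpa using this⟩)

end ParentTree

/-- a graphical model over a rooted tree has unfolding rank at most
`min (n w) (n (P w))` along every edge; in particular its unfolding rank at every
edge is at most `n := max_k n_k`. -/
theorem tree_graphical_model_unfolding_rank {d : ℕ} (T : ParentTree d) (n : Fin d → ℕ)
    (hn : ∀ k, 1 ≤ n k)
    (p : (∀ i, Fin (n i)) → ℝ)
    (φ : Fin (n T.root) → ℝ)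
    (ψ : ∀ k : Fin d, Fin (n k) → Fin (n (T.parent k)) → ℝ)
    (hp : ∀ x, p x = φ (x T.root) *
      ∏ k ∈ Finset.univ.filter (fun k => k ≠ T.root), ψ k (x k) (x (T.parent k))) :
    ∀ w : Fin d, w ≠ T.root →
      (unfoldMatrix p (T.desc w ∪ {w})).rank ≤ min (n w) (n (T.parent w)) ∧
      (unfoldMatrix p (T.desc w ∪ {w})).rank ≤ Finset.univ.sup n := by
  intro w hw
  set S : Set (Fin d) := T.desc w ∪ {w} with hS
  have hwS : w ∈ S := Or.inr rfl
  have hroot : T.root ∉ S := ParentTree.root_not_mem hw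
  have hPw : T.parent w ∉ S := ParentTree.parent_not_mem_of_desc hw
  have hPwc : T.parent w ∈ Sᶜ := hPw
  have hrootc : T.root ∈ Sᶜ := hroot
  -- left and right factors
  set L : ((i : S) → Fin (n i.1)) → ℝ := fun xS =>
    ∏ k ∈ Finset.univ.filter (fun k => k ∈ T.desc w),
      if h : k ∈ S ∧ T.parent k ∈ S then ψ k (xS ⟨k, h.1⟩) (xS ⟨T.parent k, h.2⟩) else 1
    with hL
  set R : ((j : (Sᶜ : Set (Fin d))) → Fin (n j.1)) → ℝ := fun xSc =>
    φ (xSc ⟨T.root, hrootc⟩) *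
    ∏ k ∈ Finset.univ.filter (fun k => k ≠ T.root ∧ k ∉ S),
      if h : k ∈ Sᶜ ∧ T.parent k ∈ Sᶜ then ψ k (xSc ⟨k, h.1⟩) (xSc ⟨T.parent k, h.2⟩) else 1
    with hR
  -- the entry factorization
  have key : ∀ xS xSc, unfoldMatrix p S xS xSc =
      L xS * ψ w (xS ⟨w, hwS⟩) (xSc ⟨T.parent w, hPwc⟩) * R xSc := by
    intro xS xSc
    have main : ∀ x : ∀ i, Fin (n i), (∀ i (h : i ∈ S), x i = xS ⟨i, h⟩) →
        (∀ i (h : i ∉ S), x i = xSc ⟨i, h⟩) →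
        p x = L xS * ψ w (xS ⟨w, hwS⟩) (xSc ⟨T.parent w, hPwc⟩) * R xSc := ?_
    · exact main _ (fun i h => dif_pos h) (fun i h => dif_neg h)
    intro x hxin hxout
    rw [hp]
    have hxroot : x T.root = xSc ⟨T.root, hrootc⟩ := hxout _ hroot
    have hxw : x w = xS ⟨w, hwS⟩ := hxin _ hwS
    have hxPw : x (T.parent w) = xSc ⟨T.parent w, hPwc⟩ := hxout _ hPw
    have hsplit : (Finset.univ.filter (fun k => k ≠ T.root)) =
        (Finset.univ.filter (fun k => k ∈ S)) ∪
        (Finset.univ.filter (fun k => k ≠ T.root ∧ k ∉ S)) := by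
      ext k
      simp only [Finset.mem_filter, Finset.mem_union, Finset.mem_univ, true_and]
      constructor
      · intro hk; by_cases h : k ∈ S
        · exact Or.inl h
        · exact Or.inr ⟨hk, h⟩
      · rintro (h | ⟨h, _⟩)
        · exact fun he => hroot (he ▸ h)
        · exact h
    have hdisj : Disjoint (Finset.univ.filter (fun k => k ∈ S))
        (Finset.univ.filter (fun k => k ≠ T.root ∧ k ∉ S)) := by
      rw [Finset.disjoint_filter]
      intro k _ hk hk2
      exact hk2.2 hk
    have hSins : (Finset.univ.filter (fun k => k ∈ S)) =
        insert w (Finset.univ.filter (fun k => k ∈ T.desc w)) := by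
      ext k
      simp only [Finset.mem_filter, Finset.mem_insert, Finset.mem_univ, true_and, hS,
        Set.mem_union, Set.mem_singleton_iff]
      tauto
    have hwnd : w ∉ Finset.univ.filter (fun k => k ∈ T.desc w) := by
      intro h; exact (Finset.mem_filter.mp h).2.1 rfl
    have hprodL : ∏ k ∈ Finset.univ.filter (fun k => k ∈ T.desc w),
        ψ k (x k) (x (T.parent k)) = L xS := by
      rw [hL]
      refine Finset.prod_congr rfl fun k hk => ?_
      simp only [Finset.mem_filter] at hk
      have hkS : k ∈ S := Or.inl hk.2
      have hPkS : T.parent k ∈ S := ParentTree.parent_mem_of_mem_desc hw hk.2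
      rw [dif_pos ⟨hkS, hPkS⟩]
      congr 1 <;> [exact hxin _ hkS; exact hxin _ hPkS]
    have hprodR : ∏ k ∈ Finset.univ.filter (fun k => k ≠ T.root ∧ k ∉ S),
        ψ k (x k) (x (T.parent k)) =
        ∏ k ∈ Finset.univ.filter (fun k => k ≠ T.root ∧ k ∉ S),
          (if h : k ∈ Sᶜ ∧ T.parent k ∈ Sᶜ then
            ψ k (xSc ⟨k, h.1⟩) (xSc ⟨T.parent k, h.2⟩) else 1) := by
      refine Finset.prod_congr rfl fun k hk => ?_
      simp only [Finset.mem_filter] at hk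
      have hkc : k ∉ S := hk.2.2
      have hPkc : T.parent k ∉ S := ParentTree.parent_not_mem_of_not_mem hw hkc
      rw [dif_pos ⟨hkc, hPkc⟩]
      congr 1 <;> [exact hxout _ hkc; exact hxout _ hPkc]
    calc φ (x T.root) * ∏ k ∈ Finset.univ.filter (fun k => k ≠ T.root),
          ψ k (x k) (x (T.parent k))
        = φ (x T.root) * ((ψ w (x w) (x (T.parent w)) *
            ∏ k ∈ Finset.univ.filter (fun k => k ∈ T.desc w), ψ k (x k) (x (T.parent k))) *
          ∏ k ∈ Finset.univ.filter (fun k => k ≠ T.root ∧ k ∉ S),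
            ψ k (x k) (x (T.parent k))) := by
          rw [hsplit, Finset.prod_union hdisj, hSins, Finset.prod_insert hwnd]
      _ = L xS * ψ w (xS ⟨w, hwS⟩) (xSc ⟨T.parent w, hPwc⟩) * R xSc := by
          rw [hxroot, hxw, hxPw, hprodL, hprodR, hR]
          ring
  -- rank bound via n w
  have h1 : (unfoldMatrix p S).rank ≤ n w := by
    set A : Matrix ((i : S) → Fin (n i.1)) (Fin (n w)) ℝ :=
      fun xS a => if xS ⟨w, hwS⟩ = a then L xS else 0 with hA
    set B : Matrix (Fin (n w)) ((j : (Sᶜ : Set (Fin d))) → Fin (n j.1)) ℝ :=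
      fun a xSc => ψ w a (xSc ⟨T.parent w, hPwc⟩) * R xSc with hB
    have hAB : unfoldMatrix p S = A * B := by
      ext xS xSc
      rw [Matrix.mul_apply, key]
      rw [Finset.sum_eq_single (xS ⟨w, hwS⟩)]
      · rw [hA, hB]; beta_reduce; rw [if_pos rfl]; ring
      · intro b _ hb
        rw [hA]; beta_reduce; rw [if_neg (Ne.symm hb)]
        exact zero_mul _
      · intro h; exact absurd (Finset.mem_univ _) h
    calc (unfoldMatrix p S).rank = (A * B).rank := by rw [hAB]
      _ ≤ B.rank := Matrix.rank_mul_le_right A B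
      _ ≤ Fintype.card (Fin (n w)) := B.rank_le_card_height
      _ = n w := Fintype.card_fin _
  -- rank bound via n (parent w)
  have h2 : (unfoldMatrix p S).rank ≤ n (T.parent w) := by
    set A : Matrix ((i : S) → Fin (n i.1)) (Fin (n (T.parent w))) ℝ :=
      fun xS b => L xS * ψ w (xS ⟨w, hwS⟩) b with hA
    set B : Matrix (Fin (n (T.parent w))) ((j : (Sᶜ : Set (Fin d))) → Fin (n j.1)) ℝ :=
      fun b xSc => if xSc ⟨T.parent w, hPwc⟩ = b then R xSc else 0 with hB
    have hAB : unfoldMatrix p S = A * B := by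
      ext xS xSc
      rw [Matrix.mul_apply, key]
      rw [Finset.sum_eq_single (xSc ⟨T.parent w, hPwc⟩)]
      · rw [hA, hB]; beta_reduce; rw [if_pos rfl]
      · intro b _ hb
        rw [hB]; beta_reduce; rw [if_neg (Ne.symm hb)]
        exact mul_zero _
      · intro h; exact absurd (Finset.mem_univ _) h
    calc (unfoldMatrix p S).rank = (A * B).rank := by rw [hAB]
      _ ≤ A.rank := Matrix.rank_mul_le_left A B
      _ ≤ Fintype.card (Fin (n (T.parent w))) := A.rank_le_card_width
      _ = n (T.parent w) := Fintype.card_fin _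
  exact ⟨le_min h1 h2, h1.trans (Finset.le_sup (Finset.mem_univ w))⟩
end
end

section
/- Let (C_i)_{i=1}^n and (E_i)_{i=1}^n be real matrices with C_i and E_i of the same size for each i, and suppose ‖C_i‖ ≤ 1 and ‖E_i‖ ≤ δ_i for all i, where δ_i ≥ 0. Then ‖⊗_{i=1}^n (C_i + E_i) − ⊗_{i=1}^n C_i‖ ≤ (Σ_{i=1}^n δ_i) · exp(Σ_{i=1}^n δ_i). -/
open scoped Classical

noncomputable section

/-- The spectral norm (`ℓ² → ℓ²` operator norm) of a real matrix. -/
def specNorm {m n : Type*} [Fintype m] [Fintype n] [DecidableEq n]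
    (M : Matrix m n ℝ) : ℝ :=
  ‖LinearMap.toContinuousLinearMap (Matrix.toEuclideanLin M)‖

/-- The `⦀·⦀` norm of a 3-tensor: the maximum over the middle index of the spectral
norm of the corresponding matrix slice. -/
def tnorm {r₁ X r₂ : Type*} [Fintype r₁] [Fintype X] [Fintype r₂] [DecidableEq r₂]
    (G : r₁ → X → r₂ → ℝ) : ℝ :=
  ⨆ x : X, specNorm (Matrix.of fun α β => G α x β)

/-- The Kronecker (tensor) product of a family of matrices: rows are indexed by the
product of the row indices, columns by the product of the column indices, and the
entry is the product of the corresponding entries. -/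
def kronFamily {N : ℕ} {m p : Fin N → ℕ} (C : ∀ i, Matrix (Fin (m i)) (Fin (p i)) ℝ) :
    Matrix ((i : Fin N) → Fin (m i)) ((i : Fin N) → Fin (p i)) ℝ :=
  Matrix.of fun a b => ∏ i, C i (a i) (b i)

open scoped Matrix.Norms.L2Operator Kronecker Matrix

section Aux

variable {m n q l : Type*} [Fintype m] [Fintype n] [Fintype q] [Fintype l]
  [DecidableEq n] [DecidableEq q] [DecidableEq l]

lemma specNorm_eq_norm (M : Matrix m n ℝ) : specNorm M = ‖M‖ := rfl

lemma sq_mulVec_le (M : Matrix m n ℝ) (x : n → ℝ) :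
    ∑ a, (M *ᵥ x) a ^ 2 ≤ ‖M‖ ^ 2 * ∑ b, x b ^ 2 := by
  have h := Matrix.l2_opNorm_mulVec M ((WithLp.equiv 2 (n → ℝ)).symm x)
  rw [EuclideanSpace.norm_eq, EuclideanSpace.norm_eq] at h
  simp only [Real.norm_eq_abs, sq_abs] at h
  have h1 : (0:ℝ) ≤ ∑ a, (M *ᵥ x) a ^ 2 := Finset.sum_nonneg fun _ _ => sq_nonneg _
  have h2 : (0:ℝ) ≤ ∑ b, x b ^ 2 := Finset.sum_nonneg fun _ _ => sq_nonneg _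
  have h3 : Real.sqrt (∑ a, (M *ᵥ x) a ^ 2) ≤ ‖M‖ * Real.sqrt (∑ b, x b ^ 2) := by
    convert h using 3 <;> rfl
  nlinarith [Real.sq_sqrt h1, Real.sq_sqrt h2, Real.sqrt_nonneg (∑ a, (M *ᵥ x) a ^ 2),
    Real.sqrt_nonneg (∑ b, x b ^ 2), norm_nonneg M]

lemma norm_le_of_sq (M : Matrix m n ℝ) {c : ℝ} (hc : 0 ≤ c)
    (h : ∀ x : n → ℝ, ∑ a, (M *ᵥ x) a ^ 2 ≤ c ^ 2 * ∑ b, x b ^ 2) :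
    ‖M‖ ≤ c := by
  rw [Matrix.l2_opNorm_def]
  refine ContinuousLinearMap.opNorm_le_bound _ hc fun x => ?_
  have hx : ‖x‖ = Real.sqrt (∑ b, (x b) ^ 2) := by
    rw [EuclideanSpace.norm_eq]; simp [sq_abs]
  have hMx : ‖(Matrix.toEuclideanLin.trans LinearMap.toContinuousLinearMap) M x‖
      = Real.sqrt (∑ a, (M *ᵥ (WithLp.equiv 2 (n → ℝ)) x) a ^ 2) := by
    rw [EuclideanSpace.norm_eq]
    simp [sq_abs, Matrix.toEuclideanLin_apply]
  rw [hMx, hx]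
  calc Real.sqrt (∑ a, (M *ᵥ (WithLp.equiv 2 (n → ℝ)) x) a ^ 2)
      ≤ Real.sqrt (c ^ 2 * ∑ b, x b ^ 2) := by
        apply Real.sqrt_le_sqrt
        have := h ((WithLp.equiv 2 (n → ℝ)) x)
        convert this using 3 <;> rfl
    _ = c * Real.sqrt (∑ b, x b ^ 2) := by
        rw [Real.sqrt_mul (sq_nonneg c), Real.sqrt_sq hc]

lemma norm_submatrix_le {m' n' : Type*} [Fintype m'] [Fintype n'] [DecidableEq n']
    (M : Matrix m n ℝ) (e : m' ≃ m) (f : n' ≃ n) :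
    ‖M.submatrix e f‖ ≤ ‖M‖ := by
  refine norm_le_of_sq _ (norm_nonneg M) fun x => ?_
  have key : ∀ a : m', ((M.submatrix e f) *ᵥ x) a = (M *ᵥ (x ∘ f.symm)) (e a) := by
    intro a
    simp only [Matrix.mulVec, dotProduct, Matrix.submatrix_apply]
    exact Fintype.sum_equiv f _ _ (fun b => by simp)
  calc ∑ a, ((M.submatrix e f) *ᵥ x) a ^ 2
      = ∑ a : m', ((M *ᵥ (x ∘ f.symm)) (e a)) ^ 2 := by simp only [key]
    _ = ∑ a' : m, ((M *ᵥ (x ∘ f.symm)) a') ^ 2 := Fintype.sum_equiv e _ _ (fun a => rfl)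
    _ ≤ ‖M‖ ^ 2 * ∑ b' : n, (x (f.symm b')) ^ 2 := sq_mulVec_le M _
    _ = ‖M‖ ^ 2 * ∑ b : n', x b ^ 2 := by
        congr 1; exact Fintype.sum_equiv f.symm _ _ (fun b => rfl)

lemma norm_kronecker_one_right (M : Matrix m n ℝ) :
    ‖M ⊗ₖ (1 : Matrix q q ℝ)‖ ≤ ‖M‖ := by
  refine norm_le_of_sq _ (norm_nonneg M) fun x => ?_
  have key : ∀ (a : m) (y : q), ((M ⊗ₖ (1 : Matrix q q ℝ)) *ᵥ x) (a, y)
      = (M *ᵥ fun b => x (b, y)) a := by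
    intro a y
    simp only [Matrix.mulVec, dotProduct, Matrix.kroneckerMap_apply,
      Fintype.sum_prod_type]
    refine Finset.sum_congr rfl fun b _ => ?_
    simp [Matrix.one_apply, ite_mul, mul_ite]
  calc ∑ ay : m × q, ((M ⊗ₖ (1 : Matrix q q ℝ)) *ᵥ x) ay ^ 2
      = ∑ y : q, ∑ a : m, ((M *ᵥ fun b => x (b, y)) a) ^ 2 := by
        rw [Fintype.sum_prod_type_right]
        exact Finset.sum_congr rfl fun y _ => Finset.sum_congr rfl fun a _ => by rw [key]
    _ ≤ ∑ y : q, ‖M‖ ^ 2 * ∑ b : n, x (b, y) ^ 2 :=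
        Finset.sum_le_sum fun y _ => sq_mulVec_le M _
    _ = ‖M‖ ^ 2 * ∑ by' : n × q, x by' ^ 2 := by
        rw [← Finset.mul_sum, Fintype.sum_prod_type_right]

lemma norm_one_kronecker {X : Matrix q l ℝ} :
    ‖(1 : Matrix n n ℝ) ⊗ₖ X‖ ≤ ‖X‖ := by
  refine norm_le_of_sq _ (norm_nonneg X) fun x => ?_
  have key : ∀ (y : n) (a : q), (((1 : Matrix n n ℝ) ⊗ₖ X) *ᵥ x) (y, a)
      = (X *ᵥ fun b => x (y, b)) a := by
    intro y a
    simp only [Matrix.mulVec, dotProduct, Matrix.kroneckerMap_apply,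
      Fintype.sum_prod_type]
    rw [Finset.sum_comm]
    refine Finset.sum_congr rfl fun b _ => ?_
    simp [Matrix.one_apply, ite_mul, mul_ite]
  calc ∑ ya : n × q, (((1 : Matrix n n ℝ) ⊗ₖ X) *ᵥ x) ya ^ 2
      = ∑ y : n, ∑ a : q, ((X *ᵥ fun b => x (y, b)) a) ^ 2 := by
        rw [Fintype.sum_prod_type]
        exact Finset.sum_congr rfl fun y _ => Finset.sum_congr rfl fun a _ => by rw [key]
    _ ≤ ∑ y : n, ‖X‖ ^ 2 * ∑ b : l, x (y, b) ^ 2 :=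
        Finset.sum_le_sum fun y _ => sq_mulVec_le X _
    _ = ‖X‖ ^ 2 * ∑ yb : n × l, x yb ^ 2 := by
        rw [← Finset.mul_sum, Fintype.sum_prod_type]

lemma norm_kronecker_le (M : Matrix m n ℝ) (X : Matrix q l ℝ) :
    ‖M ⊗ₖ X‖ ≤ ‖M‖ * ‖X‖ := by
  have hfact : M ⊗ₖ X = (M ⊗ₖ (1 : Matrix q q ℝ)) * ((1 : Matrix n n ℝ) ⊗ₖ X) := by
    rw [← Matrix.mul_kronecker_mul]; simp
  rw [hfact]
  exact le_trans (Matrix.l2_opNorm_mul _ _)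
    (mul_le_mul (norm_kronecker_one_right M) norm_one_kronecker (norm_nonneg _)
      (norm_nonneg M))

end Aux

/-- Splitting off the first coordinate of a dependent product of `Fin`s. -/
def piSuccEquiv {N : ℕ} (m : Fin (N + 1) → ℕ) :
    ((i : Fin (N + 1)) → Fin (m i)) ≃ Fin (m 0) × ((i : Fin N) → Fin (m i.succ)) where
  toFun a := (a 0, fun i => a i.succ)
  invFun x := Fin.cons x.1 x.2
  left_inv a := by
    funext i
    refine Fin.cases ?_ ?_ i <;> simp
  right_inv x := by simp

lemma kronFamily_succ {N : ℕ} {m p : Fin (N + 1) → ℕ}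
    (A : ∀ i, Matrix (Fin (m i)) (Fin (p i)) ℝ) :
    kronFamily A = ((A 0) ⊗ₖ kronFamily (fun i : Fin N => A i.succ)).submatrix
      (piSuccEquiv m) (piSuccEquiv p) := by
  ext a b
  simp [kronFamily, piSuccEquiv, Fin.prod_univ_succ]

open scoped Matrix.Norms.L2Operator in
lemma norm_kronFamily_le {N : ℕ} {m p : Fin N → ℕ}
    (A : ∀ i, Matrix (Fin (m i)) (Fin (p i)) ℝ) :
    ‖kronFamily A‖ ≤ ∏ i, ‖A i‖ := by
  induction N with
  | zero =>
    simp only [Finset.univ_eq_empty, Finset.prod_empty]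
    refine norm_le_of_sq _ zero_le_one fun x => ?_
    simp [kronFamily, Matrix.mulVec, dotProduct, Fintype.sum_unique]
  | succ N ih =>
    rw [kronFamily_succ A]
    calc ‖((A 0) ⊗ₖ kronFamily (fun i : Fin N => A i.succ)).submatrix
          (piSuccEquiv m) (piSuccEquiv p)‖
        ≤ ‖(A 0) ⊗ₖ kronFamily (fun i : Fin N => A i.succ)‖ := norm_submatrix_le _ _ _
      _ ≤ ‖A 0‖ * ‖kronFamily (fun i : Fin N => A i.succ)‖ := norm_kronecker_le _ _
      _ ≤ ‖A 0‖ * ∏ i : Fin N, ‖A i.succ‖ :=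
          mul_le_mul_of_nonneg_left (ih _) (norm_nonneg _)
      _ = ∏ i, ‖A i‖ := (Fin.prod_univ_succ (fun i => ‖A i‖)).symm

open scoped Matrix.Norms.L2Operator in
lemma norm_kronFamily_sub_le {N : ℕ} {m p : Fin N → ℕ}
    (C E : ∀ i, Matrix (Fin (m i)) (Fin (p i)) ℝ)
    (δ : Fin N → ℝ) (hδ : ∀ i, 0 ≤ δ i)
    (hC : ∀ i, ‖C i‖ ≤ 1) (hE : ∀ i, ‖E i‖ ≤ δ i) :
    ‖kronFamily (fun i => C i + E i) - kronFamily C‖ ≤ (∏ i, (1 + δ i)) - 1 := by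
  induction N with
  | zero =>
    have h1 : kronFamily (fun i => C i + E i) = kronFamily C := by
      ext a b; simp [kronFamily]
    rw [h1]
    simp
  | succ N ih =>
    set KF := kronFamily (fun i : Fin N => C i.succ + E i.succ) with hKF
    set KC := kronFamily (fun i : Fin N => C i.succ) with hKC
    have hsub : kronFamily (fun i => C i + E i) - kronFamily C
        = ((C 0 ⊗ₖ (KF - KC)) + (E 0 ⊗ₖ KF)).submatrix (piSuccEquiv m) (piSuccEquiv p) := by
      rw [kronFamily_succ (fun i => C i + E i), kronFamily_succ C]
      ext a b
      simp only [Matrix.submatrix_apply, Matrix.sub_apply, Matrix.add_apply,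
        Matrix.kroneckerMap_apply, Matrix.add_apply]
      ring
    have hKFnorm : ‖KF‖ ≤ ∏ i : Fin N, (1 + δ i.succ) := by
      refine le_trans (norm_kronFamily_le _) (Finset.prod_le_prod
        (fun i _ => norm_nonneg _) (fun i _ => ?_))
      exact le_trans (norm_add_le _ _) (add_le_add (hC _) (hE _))
    have hdiff : ‖KF - KC‖ ≤ (∏ i : Fin N, (1 + δ i.succ)) - 1 :=
      ih (fun i => C i.succ) (fun i => E i.succ) (fun i => δ i.succ)
        (fun i => hδ _) (fun i => hC _) (fun i => hE _)
    have hprod_nonneg : (0:ℝ) ≤ (∏ i : Fin N, (1 + δ i.succ)) - 1 := by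
      have : (1:ℝ) ≤ ∏ i : Fin N, (1 + δ i.succ) := by
        calc (1:ℝ) = ∏ _i : Fin N, (1:ℝ) := by simp
          _ ≤ ∏ i : Fin N, (1 + δ i.succ) :=
            Finset.prod_le_prod (fun _ _ => zero_le_one) (fun i _ => by linarith [hδ i.succ])
      linarith
    calc ‖kronFamily (fun i => C i + E i) - kronFamily C‖
        = ‖((C 0 ⊗ₖ (KF - KC)) + (E 0 ⊗ₖ KF)).submatrix (piSuccEquiv m) (piSuccEquiv p)‖ := by
          rw [hsub]
      _ ≤ ‖(C 0 ⊗ₖ (KF - KC)) + (E 0 ⊗ₖ KF)‖ := norm_submatrix_le _ _ _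
      _ ≤ ‖C 0 ⊗ₖ (KF - KC)‖ + ‖E 0 ⊗ₖ KF‖ := norm_add_le _ _
      _ ≤ ‖C 0‖ * ‖KF - KC‖ + ‖E 0‖ * ‖KF‖ :=
          add_le_add (norm_kronecker_le _ _) (norm_kronecker_le _ _)
      _ ≤ 1 * ((∏ i : Fin N, (1 + δ i.succ)) - 1) + δ 0 * (∏ i : Fin N, (1 + δ i.succ)) := by
          refine add_le_add (mul_le_mul (hC 0) hdiff (norm_nonneg _) zero_le_one)
            (mul_le_mul (hE 0) hKFnorm (norm_nonneg _) (hδ 0))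
      _ = (∏ i : Fin (N + 1), (1 + δ i)) - 1 := by
          rw [Fin.prod_univ_succ]; ring

/-- if `‖C_i‖ ≤ 1` and `‖E_i‖ ≤ δ_i`, then
`‖⊗_i (C_i + E_i) − ⊗_i C_i‖ ≤ (Σ_i δ_i)·exp(Σ_i δ_i)`. -/
theorem kronecker_product_perturbation {N : ℕ} {m p : Fin N → ℕ}
    (C E : ∀ i, Matrix (Fin (m i)) (Fin (p i)) ℝ)
    (δ : Fin N → ℝ) (hδ : ∀ i, 0 ≤ δ i)
    (hC : ∀ i, specNorm (C i) ≤ 1) (hE : ∀ i, specNorm (E i) ≤ δ i) :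
    specNorm (kronFamily (fun i => C i + E i) - kronFamily C) ≤
      (∑ i, δ i) * Real.exp (∑ i, δ i) := by
  rw [specNorm_eq_norm]
  have h1 : ‖kronFamily (fun i => C i + E i) - kronFamily C‖ ≤ (∏ i, (1 + δ i)) - 1 :=
    norm_kronFamily_sub_le C E δ hδ hC hE
  set s := ∑ i, δ i with hs
  have h2 : (∏ i, (1 + δ i)) ≤ Real.exp s := by
    rw [hs, Real.exp_sum]
    exact Finset.prod_le_prod (fun i _ => by linarith [hδ i])
      (fun i _ => by linarith [Real.add_one_le_exp (δ i)])
  have h3 : Real.exp s - 1 ≤ s * Real.exp s := by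
    have ha := Real.add_one_le_exp (-s)
    have hb : Real.exp (-s) * Real.exp s = 1 := by
      rw [← Real.exp_add]; simp
    nlinarith [Real.exp_pos s]
  linarith
end
end
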